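/- Let μ be a probability measure on ℝ supported in [−C, C] and Λ > 1. Define F(w) = (∫ y dμ + (Λ²−1)·∫ y·w dμ)/(1 + (Λ²−1)·∫ w dμ). Then inf over all measurable w : ℝ → [0,1] of F(w) equals inf of F(w) over nonincreasing measurable w : ℝ → [0,1]. -/

import Mathlib

open MeasureTheory Set Filter ProbabilityTheory Topology

lemma integrable_of_bdd {μ : Measure ℝ} [IsProbabilityMeasure μ] {f : ℝ → ℝ} {M : ℝ}
    (hf : Measurable f) (h : ∀ᵐ y ∂μ, |f y| ≤ M) : Integrable f μ :=
  Integrable.mono' (integrable_const M) hf.aestronglyMeasurable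
    (by simpa [Real.norm_eq_abs] using h)

lemma exists_antitone_rearrange (μ : Measure ℝ) [IsProbabilityMeasure μ] (C : ℝ) (hC : 0 < C)
    (hsupp : ∀ᵐ y ∂μ, y ∈ Set.Icc (-C) C) (w : ℝ → ℝ) (hwm : Measurable w)
    (hw : ∀ y, w y ∈ Set.Icc (0:ℝ) 1) :
    ∃ w' : ℝ → ℝ, Measurable w' ∧ (∀ y, w' y ∈ Set.Icc (0:ℝ) 1) ∧ Antitone w' ∧
      (∫ y, w' y ∂μ) = (∫ y, w y ∂μ) ∧ (∫ y, y * w' y ∂μ) ≤ ∫ y, y * w y ∂μ := by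
  have hnull : μ {y | y ∉ Set.Icc (-C) C} = 0 := ae_iff.mp hsupp
  have hint_w : Integrable w μ :=
    integrable_of_bdd hwm (ae_of_all _ fun y => abs_le.2 ⟨by linarith [(hw y).1], (hw y).2⟩)
  have hint_yw : Integrable (fun y => y * w y) μ := by
    refine integrable_of_bdd (M := C) (measurable_id.mul hwm) (hsupp.mono fun y hy => ?_)
    have h1 : |y| ≤ C := abs_le.2 ⟨hy.1, hy.2⟩
    have h2 : |w y| ≤ 1 := abs_le.2 ⟨by linarith [(hw y).1], (hw y).2⟩
    calc |y * w y| = |y| * |w y| := abs_mul _ _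
      _ ≤ C * 1 := mul_le_mul h1 h2 (abs_nonneg _) hC.le
      _ = C := mul_one C
  set m := ∫ y, w y ∂μ with hm_def
  have hm0 : 0 ≤ m := integral_nonneg fun y => (hw y).1
  have hm1 : m ≤ 1 := by
    have := integral_mono hint_w (integrable_const 1) (fun y => (hw y).2)
    simpa using this
  rcases eq_or_lt_of_le hm0 with hm | hm
  · -- m = 0 : take w' = 0
    have hw0 : w =ᵐ[μ] 0 :=
      (integral_eq_zero_iff_of_nonneg (fun y => (hw y).1) hint_w).mp hm.symm
    have hyw0 : ∫ y, y * w y ∂μ = 0 := by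
      have : (fun y => y * w y) =ᵐ[μ] 0 := hw0.mono fun y hy => by simp [hy]
      rw [integral_congr_ae this]; simp
    refine ⟨fun _ => 0, measurable_const, fun y => by simp, antitone_const, ?_, ?_⟩
    · simp [← hm]
    · simp [hyw0]
  · -- 0 < m : threshold construction via the cdf
    have hGC : cdf μ C = 1 := by
      have h0 : μ (Set.Iic C)ᶜ = 0 := by
        refine measure_mono_null (fun y hy => ?_) hnull
        simp only [Set.compl_Iic, Set.mem_Ioi] at hy
        simp only [Set.mem_setOf_eq, Set.mem_Icc, not_and_or, not_le]
        right; exact hy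
      have h1 : μ (Set.Iic C) = 1 := (prob_compl_eq_zero_iff measurableSet_Iic).mp h0
      rw [cdf_eq_real, measureReal_def, h1]; simp
    have hG0 : ∀ s, s < -C → cdf μ s = 0 := by
      intro s hs
      have h1 : μ (Set.Iic s) = 0 := by
        refine measure_mono_null (fun y hy => ?_) hnull
        simp only [Set.mem_Iic] at hy
        simp only [Set.mem_setOf_eq, Set.mem_Icc, not_and_or, not_le]
        left; linarith
      rw [cdf_eq_real, measureReal_def, h1]; simp
    set Sset := {s : ℝ | m ≤ cdf μ s} with hSset
    have hCne : C ∈ Sset := by rw [hSset, Set.mem_setOf_eq, hGC]; exact hm1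
    have hbdd : BddBelow Sset := by
      refine ⟨-C, fun s hs => ?_⟩
      by_contra h
      push_neg at h
      rw [hSset, Set.mem_setOf_eq, hG0 s h] at hs
      linarith
    set t := sInf Sset with ht_def
    have ht_mem : ∀ s, t < s → m ≤ cdf μ s := by
      intro s hs
      obtain ⟨u, hu, hus⟩ := exists_lt_of_csInf_lt ⟨C, hCne⟩ hs
      exact hu.trans ((cdf μ).mono hus.le)
    have hGt : m ≤ cdf μ t := by
      have hrc : Tendsto (cdf μ) (𝓝[>] t) (𝓝 (cdf μ t)) :=
        ((cdf μ).right_continuous t).mono_left (nhdsWithin_mono _ Ioi_subset_Ici_self)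
      exact ge_of_tendsto hrc (eventually_nhdsWithin_of_forall fun s hs => ht_mem s hs)
    have hlt : Function.leftLim (cdf μ) t ≤ m := by
      refine le_of_tendsto ((cdf μ).mono.tendsto_leftLim t)
        (eventually_nhdsWithin_of_forall fun s hs => ?_)
      by_contra hc
      push_neg at hc
      exact absurd (csInf_le hbdd hc.le) (not_le.2 hs)
    set a := Function.leftLim (cdf μ) t with ha_def
    have hale : a ≤ cdf μ t := (cdf μ).mono.leftLim_le le_rfl
    set b := cdf μ t - a with hb_def
    have hb0 : 0 ≤ b := by simp [hb_def]; linarith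
    have hmus : (μ {t}).toReal = b := by
      have h1 : μ {t} = ENNReal.ofReal b := by
        conv_lhs => rw [← measure_cdf (μ := μ)]
        exact (cdf μ).measure_singleton t
      rw [h1, ENNReal.toReal_ofReal hb0]
    have hmuIic : (μ (Set.Iic t)).toReal = cdf μ t := (cdf_eq_real μ t).symm
    have hmuIio : (μ (Set.Iio t)).toReal = a := by
      have hdisj : Disjoint (Set.Iio t) ({t} : Set ℝ) := by
        simp [Set.disjoint_singleton_right]
      have hIic_eq : Set.Iic t = Set.Iio t ∪ {t} := by
        ext y; simp [le_iff_lt_or_eq]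
      have hadd : μ (Set.Iio t) + μ {t} = μ (Set.Iic t) := by
        rw [hIic_eq, measure_union hdisj (measurableSet_singleton t)]
      have := congrArg ENNReal.toReal hadd
      rw [ENNReal.toReal_add (measure_ne_top μ _) (measure_ne_top μ _), hmus, hmuIic] at this
      linarith
    set θ := if b = 0 then (0:ℝ) else (m - a) / b with hθ_def
    have hθ0 : 0 ≤ θ := by
      rw [hθ_def]; split_ifs with hb
      · exact le_rfl
      · exact div_nonneg (by linarith) hb0
    have hθ1 : θ ≤ 1 := by
      rw [hθ_def]; split_ifs with hb
      · norm_num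
      · rw [div_le_one (lt_of_le_of_ne hb0 (Ne.symm hb))]; linarith
    have hsum : a + θ * b = m := by
      rw [hθ_def]; split_ifs with hb
      · rw [hb, mul_zero, add_zero]; linarith
      · rw [div_mul_cancel₀ _ hb]; ring
    set w' := fun y => if y < t then (1:ℝ) else if y = t then θ else 0 with hw'_def
    have hw'm : Measurable w' := by
      apply Measurable.ite measurableSet_Iio measurable_const
      exact Measurable.ite (measurableSet_eq) measurable_const measurable_const
    have hw'01 : ∀ y, w' y ∈ Set.Icc (0:ℝ) 1 := by
      intro y
      simp only [hw'_def]
      split_ifs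
      · exact ⟨zero_le_one, le_rfl⟩
      · exact ⟨hθ0, hθ1⟩
      · exact ⟨le_rfl, zero_le_one⟩
    have hw'anti : Antitone w' := by
      intro y1 y2 h
      rcases lt_trichotomy y1 t with h1 | h1 | h1
      · have : w' y1 = 1 := by simp [hw'_def, h1]
        rw [this]; exact (hw'01 y2).2
      · have hy1 : w' y1 = θ := by simp [hw'_def, h1]
        rcases eq_or_lt_of_le h with h2 | h2
        · rw [← h2, hy1]
        · have : w' y2 = 0 := by
            have h3 : t < y2 := h1 ▸ h2
            simp [hw'_def, not_lt.2 h3.le, h3.ne']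
          rw [this, hy1]; exact hθ0
      · have h2 : t < y2 := lt_of_lt_of_le h1 h
        have e1 : w' y1 = 0 := by simp [hw'_def, not_lt.2 h1.le, h1.ne']
        have e2 : w' y2 = 0 := by simp [hw'_def, not_lt.2 h2.le, h2.ne']
        rw [e1, e2]
    have hw'eq : w' = fun y => (Set.Iio t).indicator (fun _ => (1:ℝ)) y
        + ({t} : Set ℝ).indicator (fun _ => θ) y := by
      funext y
      rcases lt_trichotomy y t with h | h | h
      · simp [hw'_def, Set.indicator, h, ne_of_lt h]
      · subst h; simp [hw'_def, Set.indicator, lt_irrefl]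
      · simp [hw'_def, Set.indicator, not_lt.2 h.le, h.ne']
    have hint_w' : Integrable w' μ := by
      rw [hw'eq]
      exact ((integrable_const 1).indicator measurableSet_Iio).add
        ((integrable_const θ).indicator (measurableSet_singleton t))
    have hw'int : ∫ y, w' y ∂μ = m := by
      rw [hw'eq, integral_add ((integrable_const 1).indicator measurableSet_Iio)
        ((integrable_const θ).indicator (measurableSet_singleton t)),
        integral_indicator_const _ measurableSet_Iio,
        integral_indicator_const _ (measurableSet_singleton t), measureReal_def, measureReal_def, hmuIio, hmus]
      simp only [smul_eq_mul, mul_one]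
      nlinarith [hsum]
    have hint_yw' : Integrable (fun y => y * w' y) μ := by
      refine integrable_of_bdd (M := C) (measurable_id.mul hw'm) (hsupp.mono fun y hy => ?_)
      have h1 : |y| ≤ C := abs_le.2 ⟨hy.1, hy.2⟩
      have h2 : |w' y| ≤ 1 := abs_le.2 ⟨by linarith [(hw'01 y).1], (hw'01 y).2⟩
      calc |y * w' y| = |y| * |w' y| := abs_mul _ _
        _ ≤ C * 1 := mul_le_mul h1 h2 (abs_nonneg _) hC.le
        _ = C := mul_one C
    have hkey : ∫ y, y * w' y ∂μ ≤ ∫ y, y * w y ∂μ := by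
      have h0 : 0 ≤ ∫ y, (y - t) * (w y - w' y) ∂μ := by
        refine integral_nonneg fun y => ?_
        rcases lt_trichotomy y t with h | h | h
        · have : w' y = 1 := by simp [hw'_def, h]
          rw [this]
          have h1 : y - t ≤ 0 := by linarith
          have h2 : w y - 1 ≤ 0 := by linarith [(hw y).2]
          have h3 := mul_nonneg (neg_nonneg.2 h1) (neg_nonneg.2 h2)
          rwa [neg_mul_neg] at h3
        · subst h; simp
        · have : w' y = 0 := by simp [hw'_def, not_lt.2 h.le, h.ne']
          rw [this]
          exact mul_nonneg (by linarith) (by linarith [(hw y).1])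
      have hfun : (fun y => (y - t) * (w y - w' y))
          = fun y => (y * w y - y * w' y) - t * (w y - w' y) := by
        funext y; ring
      have hA : Integrable (fun y => y * w y - y * w' y) μ := hint_yw.sub hint_yw'
      have hB : Integrable (fun y => t * (w y - w' y)) μ := (hint_w.sub hint_w').const_mul t
      have hcalc : ∫ y, (y - t) * (w y - w' y) ∂μ
          = ((∫ y, y * w y ∂μ) - ∫ y, y * w' y ∂μ)
            - t * ((∫ y, w y ∂μ) - ∫ y, w' y ∂μ) := by
        rw [hfun, integral_sub hA hB, integral_sub hint_yw hint_yw', integral_const_mul t _,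
          integral_sub hint_w hint_w']
      rw [hcalc, hw'int, ← hm_def, sub_self, mul_zero, sub_zero] at h0
      linarith
    exact ⟨w', hw'm, hw'01, hw'anti, hw'int, hkey⟩

theorem stmt_5 (μ : Measure ℝ) [IsProbabilityMeasure μ] (C : ℝ) (hC : 0 < C)
    (hsupp : ∀ᵐ y ∂μ, y ∈ Set.Icc (-C) C) (Λ : ℝ) (hΛ : 1 < Λ) :
    sInf {x : ℝ | ∃ w : ℝ → ℝ, Measurable w ∧ (∀ y, w y ∈ Set.Icc (0:ℝ) 1) ∧
        x = (∫ y, y ∂μ + (Λ ^ 2 - 1) * ∫ y, y * w y ∂μ) /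
              (1 + (Λ ^ 2 - 1) * ∫ y, w y ∂μ)}
    = sInf {x : ℝ | ∃ w : ℝ → ℝ, Measurable w ∧ (∀ y, w y ∈ Set.Icc (0:ℝ) 1) ∧
        Antitone w ∧
        x = (∫ y, y ∂μ + (Λ ^ 2 - 1) * ∫ y, y * w y ∂μ) /
              (1 + (Λ ^ 2 - 1) * ∫ y, w y ∂μ)} := by
  have hΛ2 : (0:ℝ) < Λ ^ 2 - 1 := by nlinarith
  set S := {x : ℝ | ∃ w : ℝ → ℝ, Measurable w ∧ (∀ y, w y ∈ Set.Icc (0:ℝ) 1) ∧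
        x = (∫ y, y ∂μ + (Λ ^ 2 - 1) * ∫ y, y * w y ∂μ) /
              (1 + (Λ ^ 2 - 1) * ∫ y, w y ∂μ)} with hS_def
  set T := {x : ℝ | ∃ w : ℝ → ℝ, Measurable w ∧ (∀ y, w y ∈ Set.Icc (0:ℝ) 1) ∧
        Antitone w ∧
        x = (∫ y, y ∂μ + (Λ ^ 2 - 1) * ∫ y, y * w y ∂μ) /
              (1 + (Λ ^ 2 - 1) * ∫ y, w y ∂μ)} with hT_def
  have hid_int : Integrable (fun y : ℝ => y) μ :=
    integrable_of_bdd (M := C) measurable_id (hsupp.mono fun y hy => abs_le.2 ⟨hy.1, hy.2⟩)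
  have hA : -C ≤ ∫ y, y ∂μ := by
    have := integral_mono_ae (integrable_const (-C)) hid_int
      (hsupp.mono fun y hy => hy.1)
    simpa using this
  have hbound : ∀ w : ℝ → ℝ, Measurable w → (∀ y, w y ∈ Set.Icc (0:ℝ) 1) →
      -C * Λ ^ 2 ≤ (∫ y, y ∂μ + (Λ ^ 2 - 1) * ∫ y, y * w y ∂μ) /
        (1 + (Λ ^ 2 - 1) * ∫ y, w y ∂μ) := by
    intro w hwm hw01
    have hint_yw : Integrable (fun y => y * w y) μ := by
      refine integrable_of_bdd (M := C) (measurable_id.mul hwm) (hsupp.mono fun y hy => ?_)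
      have h1 : |y| ≤ C := abs_le.2 ⟨hy.1, hy.2⟩
      have h2 : |w y| ≤ 1 := abs_le.2 ⟨by linarith [(hw01 y).1], (hw01 y).2⟩
      calc |y * w y| = |y| * |w y| := abs_mul _ _
        _ ≤ C * 1 := mul_le_mul h1 h2 (abs_nonneg _) hC.le
        _ = C := mul_one C
    have haux : ∀ᵐ y ∂μ, -C ≤ y * w y := by
      filter_upwards [hsupp] with y hy
      nlinarith [(hw01 y).1, (hw01 y).2, hy.1, hy.2,
        mul_nonneg (show (0:ℝ) ≤ y + C by linarith [hy.1]) (hw01 y).1]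
    have hI : -C ≤ ∫ y, y * w y ∂μ := by
      have := integral_mono_ae (integrable_const (-C)) hint_yw haux
      simpa using this
    have hJ0 : 0 ≤ ∫ y, w y ∂μ := integral_nonneg fun y => (hw01 y).1
    have hden : 0 < 1 + (Λ ^ 2 - 1) * ∫ y, w y ∂μ := by nlinarith
    rw [le_div_iff₀ hden]
    nlinarith [mul_nonneg (mul_nonneg hC.le (by nlinarith : (0:ℝ) ≤ Λ ^ 2)) hJ0,
      mul_nonneg hJ0 hΛ2.le]
  have hS_bdd : BddBelow S := by
    refine ⟨-C * Λ ^ 2, fun x hx => ?_⟩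
    obtain ⟨w, h1, h2, h4⟩ := hx
    exact h4 ▸ hbound w h1 h2
  have hTS : T ⊆ S := by
    rintro x ⟨w, h1, h2, _, h4⟩
    exact ⟨w, h1, h2, h4⟩
  have hT_ne : T.Nonempty := by
    refine ⟨_, fun _ => 0, measurable_const, fun y => ⟨le_rfl, zero_le_one⟩,
      antitone_const, rfl⟩
  have hS_ne : S.Nonempty := hT_ne.mono hTS
  have hT_bdd : BddBelow T := hS_bdd.mono hTS
  apply le_antisymm
  · exact csInf_le_csInf hS_bdd hT_ne hTS
  · refine le_csInf hS_ne ?_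
    rintro x ⟨w, hwm, hw01, rfl⟩
    obtain ⟨w', h1, h2, h3, h4, h5⟩ := exists_antitone_rearrange μ C hC hsupp w hwm hw01
    refine le_trans (csInf_le hT_bdd ⟨w', h1, h2, h3, rfl⟩) ?_
    rw [h4]
    have hJ0 : 0 ≤ ∫ y, w y ∂μ := integral_nonneg fun y => (hw01 y).1
    have hden : 0 < 1 + (Λ ^ 2 - 1) * ∫ y, w y ∂μ := by nlinarith
    exact (div_le_div_iff_of_pos_right hden).mpr (by nlinarith)
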